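/- For Σ symmetric positive definite and prior π = N(β_0, τ²I) on β ∈ ℝ^k, the mixture of Gaussian density ratios Λ_n^π := ∫ ψ_{(M(β−β_0), Σ/n)}(w) / ψ_{(0, Σ/n)}(w) · ψ_{(β_0, τ²I)}(β) dβ has the closed form Λ_n^π = det(I + n τ² M Σ^{-1} M)^{-1/2} · exp( (n²τ²/2) wᵀ Σ^{-1} M (I + n τ² M Σ^{-1} M)^{-1} M Σ^{-1} w ), for any fixed w ∈ ℝ^k and symmetric positive-definite matrix M. -/

import Mathlib

open MeasureTheory Matrix
open Real

lemma dot_symm' {k : ℕ} {B : Matrix (Fin k) (Fin k) ℝ} (hB : Bᵀ = B) (x y : Fin k → ℝ) :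
    x ⬝ᵥ B *ᵥ y = y ⬝ᵥ B *ᵥ x := by
  rw [dotProduct_mulVec, show x ᵥ* B = Bᵀ *ᵥ x by rw [← vecMul_transpose, transpose_transpose],
    hB, dotProduct_comm]

lemma dot_mulVec_mulVec' {k : ℕ} (B C : Matrix (Fin k) (Fin k) ℝ) (x y : Fin k → ℝ) :
    (B *ᵥ x) ⬝ᵥ (C *ᵥ y) = x ⬝ᵥ (Bᵀ * C) *ᵥ y := by
  rw [dotProduct_mulVec, vecMul_mulVec, ← dotProduct_mulVec]

lemma cont_dot' {k : ℕ} (A : Matrix (Fin k) (Fin k) ℝ) (b : Fin k → ℝ) (c : ℝ) :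
    Continuous (fun x : Fin k → ℝ => c * Real.exp (-(1/2) * (x ⬝ᵥ A *ᵥ x) + b ⬝ᵥ x)) := by
  have h1 : ∀ (v : Fin k → ℝ), Continuous (fun x : Fin k → ℝ => v ⬝ᵥ x) := by
    intro v; unfold dotProduct
    exact continuous_finset_sum _ (fun i _ => continuous_const.mul (continuous_apply i))
  have h2 : Continuous (fun x : Fin k → ℝ => x ⬝ᵥ A *ᵥ x) := by
    unfold dotProduct mulVec
    refine continuous_finset_sum _ (fun i _ => (continuous_apply i).mul ?_)
    exact continuous_finset_sum _ (fun j _ => continuous_const.mul (continuous_apply j))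
  exact continuous_const.mul (((continuous_const.mul h2).add (h1 b)).rexp)

lemma transpose_eq_of_hermitian' {k : ℕ} {A : Matrix (Fin k) (Fin k) ℝ} (h : A.IsHermitian) :
    Aᵀ = A := by
  ext i j
  have := congrFun (congrFun (h : Aᴴ = A) i) j
  simpa [Matrix.conjTranspose_apply] using this

lemma posDef_smul' {k : ℕ} {A : Matrix (Fin k) (Fin k) ℝ} (hA : A.PosDef) {c : ℝ} (hc : 0 < c) :
    (c • A).PosDef := by
  refine ⟨?_, fun x hx => ?_⟩
  · show (c • A)ᴴ = c • A
    rw [conjTranspose_smul, star_trivial, (hA.isHermitian : Aᴴ = A)]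
  · exact (hA.smul hc).2 hx

lemma posSemidef_smul' {k : ℕ} {A : Matrix (Fin k) (Fin k) ℝ} (hA : A.PosSemidef) {c : ℝ}
    (hc : 0 ≤ c) : (c • A).PosSemidef := by
  refine ⟨?_, fun x => ?_⟩
  · show (c • A)ᴴ = c • A
    rw [conjTranspose_smul, star_trivial, (hA.isHermitian : Aᴴ = A)]
  · exact (hA.smul hc).2 x

lemma gauss_real' {k : ℕ} (c : Fin k → ℝ) :
    ∫ u : Fin k → ℝ, Real.exp (-(1/2) * (u ⬝ᵥ u) + c ⬝ᵥ u)
      = (2*π) ^ ((k:ℝ)/2) * Real.exp ((c ⬝ᵥ c)/2) := by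
  have h := GaussianFourier.integral_cexp_neg_mul_sum_add (ι := Fin k) (b := (1/2 : ℂ))
    (by norm_num) (fun i => (c i : ℂ))
  have hL : (∫ v : Fin k → ℝ, Complex.exp (-(1/2 : ℂ) * ∑ i, (v i : ℂ)^2 + ∑ i, (c i : ℂ) * v i))
      = ((∫ u : Fin k → ℝ, Real.exp (-(1/2) * (u ⬝ᵥ u) + c ⬝ᵥ u) : ℝ) : ℂ) := by
    calc (∫ v : Fin k → ℝ, Complex.exp (-(1/2 : ℂ) * ∑ i, (v i : ℂ)^2 + ∑ i, (c i : ℂ) * v i))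
        = ∫ v : Fin k → ℝ, ((Real.exp (-(1/2) * (v ⬝ᵥ v) + c ⬝ᵥ v) : ℝ) : ℂ) := by
          congr 1; ext v
          rw [Complex.ofReal_exp]
          congr 1
          push_cast [dotProduct]
          simp only [pow_two]
          try ring
      _ = _ := integral_ofReal
  have hR : ((π : ℂ) / (1/2)) ^ ((Fintype.card (Fin k)) / 2 : ℂ) *
      Complex.exp ((∑ i, (c i : ℂ)^2) / (4 * (1/2)))
      = (((2*π) ^ ((k:ℝ)/2) * Real.exp ((c ⬝ᵥ c)/2) : ℝ) : ℂ) := by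
    have h1 : ((π : ℂ) / (1/2)) = ((2*π : ℝ) : ℂ) := by push_cast; ring
    have h2 : (((Fintype.card (Fin k)) / 2 : ℂ)) = (((k:ℝ)/2 : ℝ) : ℂ) := by
      simp [Fintype.card_fin]
    rw [h1, h2, ← Complex.ofReal_cpow (by positivity), Complex.ofReal_mul]
    congr 1
    rw [Complex.ofReal_exp]
    congr 1
    push_cast [dotProduct]
    simp only [pow_two]
    try ring
  rw [hL, hR] at h
  exact_mod_cast h

lemma integral_comp_mulVec' {k : ℕ} (S : Matrix (Fin k) (Fin k) ℝ) (hS : S.det ≠ 0)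
    (f : (Fin k → ℝ) → ℝ) (hf : Continuous f) :
    ∫ x, f x = |S.det| * ∫ u, f (S *ᵥ u) := by
  have hmap := Real.map_matrix_volume_pi_eq_smul_volume_pi (M := S) hS
  have habs : |S.det| * |S.det⁻¹| = 1 := by
    rw [abs_inv]; exact mul_inv_cancel₀ (abs_ne_zero.mpr hS)
  have hvol : (volume : Measure (Fin k → ℝ))
      = ENNReal.ofReal |S.det| • Measure.map (Matrix.toLin' S) volume := by
    rw [hmap, smul_smul, ← ENNReal.ofReal_mul (abs_nonneg _), habs,
      ENNReal.ofReal_one, one_smul]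
  conv_lhs => rw [hvol]
  rw [integral_smul_measure,
    integral_map ((Matrix.toLin' S).continuous_of_finiteDimensional.measurable.aemeasurable)
      hf.aestronglyMeasurable]
  simp only [ENNReal.toReal_ofReal (abs_nonneg _), Matrix.toLin'_apply, smul_eq_mul]


/-- The `k`-variate normal density with mean `m` and covariance matrix `C`. -/
noncomputable def mvnPdf {k : ℕ} (m : Fin k → ℝ) (C : Matrix (Fin k) (Fin k) ℝ)
    (x : Fin k → ℝ) : ℝ :=
  (Real.sqrt ((2 * Real.pi) ^ k * C.det))⁻¹ *
    Real.exp (-(1 / 2) * ((x - m) ⬝ᵥ C⁻¹ *ᵥ (x - m)))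

/-- Closed form of the mixture of Gaussian density ratios with prior `N(β₀, τ²I)`:
`∫ ψ_{(M(β−β₀),Σ/n)}(w)/ψ_{(0,Σ/n)}(w) · ψ_{(β₀,τ²I)}(β) dβ
  = det(I + nτ² MΣ⁻¹M)^{-1/2} exp((n²τ²/2) wᵀΣ⁻¹M(I + nτ²MΣ⁻¹M)⁻¹MΣ⁻¹w)`. -/
theorem sst_mixture_statistic_closed_form
    {k : ℕ} (Sig M : Matrix (Fin k) (Fin k) ℝ)
    (hSig : Sig.PosDef) (hM : M.PosDef)
    (β₀ w : Fin k → ℝ) (τ : ℝ) (hτ : 0 < τ) (n : ℕ) (hn : 1 ≤ n) :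
    ∫ β : Fin k → ℝ,
        (mvnPdf (M *ᵥ (β - β₀)) ((n : ℝ)⁻¹ • Sig) w /
            mvnPdf 0 ((n : ℝ)⁻¹ • Sig) w) *
          mvnPdf β₀ (τ ^ 2 • (1 : Matrix (Fin k) (Fin k) ℝ)) β ∂volume =
      (Real.sqrt ((1 + ((n : ℝ) * τ ^ 2) • (M * Sig⁻¹ * M)).det))⁻¹ *
        Real.exp (((n : ℝ) ^ 2 * τ ^ 2 / 2) *
          (w ⬝ᵥ (Sig⁻¹ * M * (1 + ((n : ℝ) * τ ^ 2) • (M * Sig⁻¹ * M))⁻¹ * M * Sig⁻¹)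
            *ᵥ w)) := by
  have hn0 : (0:ℝ) < n := by exact_mod_cast hn
  have hτ2 : (0:ℝ) < τ^2 := by positivity
  have hπ := Real.pi_pos
  have hMt : Mᵀ = M := transpose_eq_of_hermitian' hM.isHermitian
  have hSt' : Sigᵀ = Sig := transpose_eq_of_hermitian' hSig.isHermitian
  have hNt : (Sig⁻¹)ᵀ = Sig⁻¹ := by rw [Matrix.transpose_nonsing_inv, hSt']
  have hMSM : (M * Sig⁻¹ * M).PosSemidef := by
    have h := (hSig.inv.posSemidef).conjTranspose_mul_mul_same (B := M)
    rwa [(hM.isHermitian : Mᴴ = M)] at h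
  -- the matrices A, B and vector b
  set A : Matrix (Fin k) (Fin k) ℝ :=
    (τ^2)⁻¹ • (1 : Matrix (Fin k) (Fin k) ℝ) + (n:ℝ) • (M * Sig⁻¹ * M) with hA
  set B : Matrix (Fin k) (Fin k) ℝ := 1 + ((n:ℝ) * τ^2) • (M * Sig⁻¹ * M) with hB
  set b : Fin k → ℝ := (n:ℝ) • ((M * Sig⁻¹) *ᵥ w) with hb
  have hApos : A.PosDef :=
    (posDef_smul' Matrix.PosDef.one (by positivity)).add_posSemidef
      (posSemidef_smul' hMSM (le_of_lt hn0))
  have hdetA : 0 < A.det := hApos.det_pos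
  have hBA : B = τ^2 • A := by
    rw [hA, smul_add, smul_smul, smul_smul, mul_inv_cancel₀ hτ2.ne', one_smul, mul_comm]
  have hAB : A = (τ^2)⁻¹ • B := by
    rw [hBA, smul_smul, inv_mul_cancel₀ hτ2.ne', one_smul]
  have hBpos : B.PosDef := hBA ▸ posDef_smul' hApos hτ2
  have hdetB : B.det = (τ^2)^k * A.det := by
    rw [hBA, det_smul, Fintype.card_fin]
  have hAinvB : A⁻¹ = τ^2 • B⁻¹ := by
    apply Matrix.inv_eq_right_inv
    rw [hAB, Matrix.smul_mul, Matrix.mul_smul, smul_smul, inv_mul_cancel₀ hτ2.ne',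
      Matrix.mul_nonsing_inv _ hBpos.det_pos.ne'.isUnit, one_smul]
  -- the square root S of A⁻¹
  open scoped MatrixOrder in
  set S : Matrix (Fin k) (Fin k) ℝ := CFC.sqrt A⁻¹ with hSdef
  open scoped MatrixOrder in
  have hS2 : S * S = A⁻¹ := CFC.sqrt_mul_sqrt_self _ hApos.inv.posSemidef.nonneg
  open scoped MatrixOrder in
  have hSt : Sᵀ = S :=
    transpose_eq_of_hermitian' (CFC.sqrt_nonneg _).posSemidef.isHermitian
  have hSAS : S * A * S = 1 := by
    have h1 : (A * S) * S = 1 := by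
      rw [Matrix.mul_assoc, hS2, Matrix.mul_nonsing_inv _ hdetA.ne'.isUnit]
    have h3 : S * (A * S) = 1 := mul_eq_one_comm.mp h1
    rw [Matrix.mul_assoc]; exact h3
  have hdetS2 : S.det^2 = A.det⁻¹ := by
    rw [pow_two, ← det_mul, hS2, Matrix.det_nonsing_inv, Ring.inverse_eq_inv']
  have hdetSne : S.det ≠ 0 := by
    intro h
    rw [h] at hdetS2
    have : A.det⁻¹ = 0 := by rw [← hdetS2]; norm_num
    exact absurd this (by positivity)
  have habsS : |S.det| = Real.sqrt (A.det)⁻¹ := by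
    rw [← hdetS2, Real.sqrt_sq_eq_abs]
  -- inverses of the scaled covariance matrices
  have hCinv : ((n:ℝ)⁻¹ • Sig)⁻¹ = (n:ℝ) • Sig⁻¹ := by
    apply Matrix.inv_eq_right_inv
    rw [Matrix.smul_mul, Matrix.mul_smul, smul_smul, inv_mul_cancel₀ hn0.ne',
      Matrix.mul_nonsing_inv _ hSig.det_pos.ne'.isUnit, one_smul]
  have hTinv : (τ^2 • (1 : Matrix (Fin k) (Fin k) ℝ))⁻¹
      = (τ^2)⁻¹ • (1 : Matrix (Fin k) (Fin k) ℝ) := by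
    apply Matrix.inv_eq_right_inv
    rw [Matrix.smul_mul, Matrix.mul_smul, smul_smul, mul_inv_cancel₀ hτ2.ne',
      Matrix.one_mul, one_smul]
  have hT : (τ^2 • (1 : Matrix (Fin k) (Fin k) ℝ)).det = (τ^2)^k := by
    rw [det_smul, det_one, Fintype.card_fin, mul_one]
  set c₀ : ℝ := (Real.sqrt ((2*π)^k * (τ^2)^k))⁻¹ with hc₀
  -- pointwise identity
  have key : ∀ δ : Fin k → ℝ,
      (-(1/2) * ((w - M *ᵥ δ) ⬝ᵥ ((n:ℝ) • Sig⁻¹) *ᵥ (w - M *ᵥ δ))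
          - -(1/2) * ((w - 0) ⬝ᵥ ((n:ℝ) • Sig⁻¹) *ᵥ (w - 0)))
        + -(1/2) * (δ ⬝ᵥ ((τ^2)⁻¹ • (1 : Matrix (Fin k) (Fin k) ℝ)) *ᵥ δ)
      = -(1/2) * (δ ⬝ᵥ A *ᵥ δ) + b ⬝ᵥ δ := by
    intro δ
    have r1 : w ⬝ᵥ Sig⁻¹ *ᵥ (M *ᵥ δ) = δ ⬝ᵥ (M * Sig⁻¹) *ᵥ w := by
      rw [dot_symm' hNt w (M *ᵥ δ), dot_mulVec_mulVec', hMt]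
    have r2 : (M *ᵥ δ) ⬝ᵥ Sig⁻¹ *ᵥ w = δ ⬝ᵥ (M * Sig⁻¹) *ᵥ w := by
      rw [dot_mulVec_mulVec', hMt]
    have r3 : (M *ᵥ δ) ⬝ᵥ Sig⁻¹ *ᵥ (M *ᵥ δ) = δ ⬝ᵥ (M * Sig⁻¹ * M) *ᵥ δ := by
      rw [dot_mulVec_mulVec', mulVec_mulVec, hMt]
    simp only [hA, hb, sub_zero, smul_mulVec, dotProduct_smul, smul_eq_mul, add_mulVec,
      one_mulVec, dotProduct_add, mulVec_sub, dotProduct_sub, sub_dotProduct, smul_dotProduct]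
    rw [r1, r2, r3, dotProduct_comm ((M * Sig⁻¹) *ᵥ w) δ]
    ring
  have hpt : ∀ β : Fin k → ℝ,
      (mvnPdf (M *ᵥ (β - β₀)) ((n : ℝ)⁻¹ • Sig) w / mvnPdf 0 ((n : ℝ)⁻¹ • Sig) w) *
          mvnPdf β₀ (τ ^ 2 • (1 : Matrix (Fin k) (Fin k) ℝ)) β
        = c₀ * Real.exp (-(1/2) * ((β - β₀) ⬝ᵥ A *ᵥ (β - β₀)) + b ⬝ᵥ (β - β₀)) := by
    intro β
    unfold mvnPdf
    rw [hCinv, hTinv, hT]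
    have hcst : (Real.sqrt ((2*π)^k * ((n:ℝ)⁻¹ • Sig).det))⁻¹ ≠ 0 := by
      have hd : ((n:ℝ)⁻¹ • Sig).det = ((n:ℝ)⁻¹)^k * Sig.det := by
        rw [det_smul, Fintype.card_fin]
      rw [hd]
      have hpos : (0:ℝ) < (2*π)^k * (((n:ℝ)⁻¹)^k * Sig.det) := by
        have := hSig.det_pos; positivity
      exact inv_ne_zero (Real.sqrt_pos.mpr hpos).ne'
    rw [mul_div_mul_left _ _ hcst, ← Real.exp_sub, mul_left_comm, ← Real.exp_add]
    rw [← hc₀]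
    exact congrArg (fun t => c₀ * Real.exp t) (key (β - β₀))
  -- rewrite the integral
  rw [integral_congr_ae (Filter.Eventually.of_forall hpt)]
  rw [show (fun β : Fin k → ℝ =>
      c₀ * Real.exp (-(1/2) * ((β - β₀) ⬝ᵥ A *ᵥ (β - β₀)) + b ⬝ᵥ (β - β₀)))
    = (fun β : Fin k → ℝ =>
      (fun δ => c₀ * Real.exp (-(1/2) * (δ ⬝ᵥ A *ᵥ δ) + b ⬝ᵥ δ)) (β - β₀)) from rfl]
  rw [integral_sub_right_eq_self
    (fun δ : Fin k → ℝ => c₀ * Real.exp (-(1/2) * (δ ⬝ᵥ A *ᵥ δ) + b ⬝ᵥ δ)) β₀]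
  rw [integral_comp_mulVec' S hdetSne _ (cont_dot' A b c₀)]
  have hq : ∀ u : Fin k → ℝ, (S *ᵥ u) ⬝ᵥ A *ᵥ (S *ᵥ u) = u ⬝ᵥ u := by
    intro u
    rw [dot_mulVec_mulVec', mulVec_mulVec, hSt, hSAS, one_mulVec]
  have hb' : ∀ u : Fin k → ℝ, b ⬝ᵥ (S *ᵥ u) = (S *ᵥ b) ⬝ᵥ u := by
    intro u
    rw [dot_symm' hSt b u, dotProduct_comm]
  simp_rw [hq, hb']
  rw [MeasureTheory.integral_const_mul, gauss_real' (S *ᵥ b)]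
  -- final algebra
  have hSb : (S *ᵥ b) ⬝ᵥ (S *ᵥ b) = b ⬝ᵥ A⁻¹ *ᵥ b := by
    rw [dot_mulVec_mulVec', hSt, hS2]
  have hkey : ((M * Sig⁻¹) *ᵥ w) ⬝ᵥ B⁻¹ *ᵥ ((M * Sig⁻¹) *ᵥ w)
      = w ⬝ᵥ (Sig⁻¹ * M * B⁻¹ * M * Sig⁻¹) *ᵥ w := by
    rw [dot_mulVec_mulVec', mulVec_mulVec, transpose_mul, hMt, hNt, Matrix.mul_assoc
      (Sig⁻¹ * M * B⁻¹) M Sig⁻¹]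
  have hexp : b ⬝ᵥ A⁻¹ *ᵥ b
      = (n:ℝ)^2 * τ^2 * (w ⬝ᵥ (Sig⁻¹ * M * B⁻¹ * M * Sig⁻¹) *ᵥ w) := by
    rw [hAinvB, hb]
    simp only [smul_mulVec, mulVec_smul, dotProduct_smul, smul_dotProduct, smul_eq_mul]
    rw [hkey]
    ring
  have hhalf : Real.sqrt ((2*π)^k) = (2*π)^((k:ℝ)/2) := by
    rw [Real.sqrt_eq_rpow, ← Real.rpow_natCast (2*π) k, ← Real.rpow_mul (by positivity)]
    congr 1
    ring
  have hconst : |S.det| * (c₀ * (2*π)^((k:ℝ)/2)) = (Real.sqrt B.det)⁻¹ := by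
    rw [habsS, hc₀, hdetB, Real.sqrt_inv, Real.sqrt_mul (by positivity),
      Real.sqrt_mul (by positivity), ← hhalf]
    have h1 : 0 < Real.sqrt ((2*π)^k) := Real.sqrt_pos.mpr (by positivity)
    have h2 : 0 < Real.sqrt ((τ^2)^k) := Real.sqrt_pos.mpr (by positivity)
    have h3 : 0 < Real.sqrt A.det := Real.sqrt_pos.mpr hdetA
    field_simp
  calc |S.det| * (c₀ * ((2*π)^((k:ℝ)/2) * Real.exp ((S *ᵥ b ⬝ᵥ (S *ᵥ b))/2)))
      = (|S.det| * (c₀ * (2*π)^((k:ℝ)/2))) * Real.exp ((b ⬝ᵥ A⁻¹ *ᵥ b)/2) := by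
        rw [hSb]; ring
    _ = (Real.sqrt B.det)⁻¹ * Real.exp (((n:ℝ)^2 * τ^2 / 2) *
          (w ⬝ᵥ (Sig⁻¹ * M * B⁻¹ * M * Sig⁻¹) *ᵥ w)) := by
        rw [hconst, hexp]
        congr 1
        ring
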